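/- Let P be a finite poset and let λ : Sd(P) → P be the last vertex map from the barycentric subdivision poset to P, in the presence of a linear ordering structure as follows: each σ ∈ P has a finite vertex set Vert(σ) in a linearly ordered set V with σ ↦ max(Vert(σ)) monotone. For a strictly increasing chain σ = (σ_0 < ⋯ < σ_n), the tuple (max(σ_0), …, max(σ_n)) is weakly increasing, and the composite of the chain-level subdivision map followed by the last vertex map is the identity on nondegenerate tuples: for any strictly increasing chain σ and any nonidentity permutation g of {0,…,n}, the tuple (max applied to the g-reordered partial chains) contains a repetition. -/
import Mathlib

/-!
The combinatorial core of the identity `λ ∘ sd = id` in the Čech comparison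
theorem.  Given a strictly increasing tuple of vertices `p : Fin (n+1) → V` in a
linear order `V` and a permutation `g` of `{0, …, n}`, let `m k` be the maximal
vertex of the face spanned by `{p (g 0), …, p (g k)}`.  Then `m` is always weakly
increasing, it equals `p` when `g` is the identity, and it contains a repetition
whenever `g` is not the identity.
-/

theorem last_vertex_of_subdivision
    {V : Type*} [LinearOrder V] {n : ℕ} (p : Fin (n + 1) → V) (hp : StrictMono p)
    (g : Equiv.Perm (Fin (n + 1))) :
    -- the tuple of successive maxima is weakly increasing
    Monotone (fun k : Fin (n + 1) =>
      (Finset.Iic k).sup' Finset.nonempty_Iic fun i => p (g i)) ∧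
    -- for the identity permutation it is the original nondegenerate tuple
    (g = 1 → (fun k : Fin (n + 1) =>
      (Finset.Iic k).sup' Finset.nonempty_Iic fun i => p (g i)) = p) ∧
    -- for any other permutation it contains a repetition
    (g ≠ 1 → ¬ Function.Injective (fun k : Fin (n + 1) =>
      (Finset.Iic k).sup' Finset.nonempty_Iic fun i => p (g i))) := by
  -- the index-level maximum
  set f : Fin (n + 1) → Fin (n + 1) :=
    fun k => (Finset.Iic k).sup' Finset.nonempty_Iic fun i => g i with hf
  have hm : ∀ k, (Finset.Iic k).sup' Finset.nonempty_Iic (fun i => p (g i)) = p (f k) := by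
    intro k
    apply le_antisymm
    · exact Finset.sup'_le _ _ fun i hi => hp.monotone (Finset.le_sup' _ hi)
    · obtain ⟨i, hi, hfi⟩ := Finset.exists_mem_eq_sup' (Finset.nonempty_Iic (a := k))
        (fun i => g i)
      rw [hf]
      dsimp only
      rw [hfi]
      exact Finset.le_sup' (fun i => p (g i)) hi
  have hfmono : Monotone f := by
    intro a b hab
    exact Finset.sup'_mono _ (Finset.Iic_subset_Iic.2 hab) _
  have hmono : Monotone (fun k : Fin (n + 1) =>
      (Finset.Iic k).sup' Finset.nonempty_Iic fun i => p (g i)) := by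
    intro a b hab
    simp only [hm]
    exact hp.monotone (hfmono hab)
  refine ⟨hmono, ?_, ?_⟩
  · rintro rfl
    funext k
    simp only [Equiv.Perm.one_apply]
    apply le_antisymm
    · exact Finset.sup'_le _ _ fun i hi => hp.monotone (Finset.mem_Iic.1 hi)
    · exact Finset.le_sup' _ (Finset.mem_Iic.2 le_rfl)
  · intro hg hinj
    apply hg
    -- injectivity of m gives injectivity of f
    have hfinj : Function.Injective f := by
      intro a b hab
      apply hinj
      simp only [hm, hab]
    have hfs : StrictMono f := hfmono.strictMono_of_injective hfinj
    have hwf : WellFoundedLT (Fin (n + 1)) := inferInstance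
    have hfid : f = id := by
      apply (hfs.range_inj strictMono_id).1
      rw [Set.range_id]
      exact Set.range_eq_univ.2 (Finite.surjective_of_injective hfinj)
    have hle : ∀ k, g k ≤ k := by
      intro k
      calc g k ≤ f k := Finset.le_sup' _ (Finset.mem_Iic.2 le_rfl)
        _ = k := by rw [hfid]; rfl
    have key : ∀ m : ℕ, ∀ k : Fin (n + 1), k.val = m → g k = k := by
      intro m
      induction m using Nat.strong_induction_on with
      | _ m IH =>
        intro k hk
        rcases lt_or_eq_of_le (hle k) with h | h
        · have hv : (g k).val < m := hk ▸ h
          have := IH _ hv (g k) rfl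
          exact absurd (g.injective this) h.ne
        · exact h
    exact Equiv.ext fun k => key k.val k rfl
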